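/- Let v_{i-1}, v_i, v_{i+1} be real numbers with b = v_{i+1} - v_i ≠ 0 and r = (v_i - v_{i-1})/b. Define the weight ω = 1/3 + (2/3)·(1 - min(2|r|/(1+|r|), 3/2)). Then P(ω) = ω·(3v_i - v_{i-1})/2 + (1-ω)·(v_i + v_{i+1})/2 satisfies min(v_{i-1}, v_i, v_{i+1}) ≤ P(ω) ≤ max(v_{i-1}, v_i, v_{i+1}). -/
import Mathlib


theorem stmt_9 (vm v vp : ℝ) (hb : vp - v ≠ 0)
    (r : ℝ) (hr : r = (v - vm) / (vp - v))
    (ω : ℝ) (hω : ω = 1/3 + (2/3) * (1 - min (2 * |r| / (1 + |r|)) (3/2))) :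
    min (min vm v) vp ≤ ω * (3 * v - vm) / 2 + (1 - ω) * (v + vp) / 2 ∧
      ω * (3 * v - vm) / 2 + (1 - ω) * (v + vp) / 2 ≤ max (max vm v) vp := by
  have hvm0 : v - vm = r * (vp - v) := by rw [hr]; field_simp
  have hvm : vm = v - r * (vp - v) := by linarith
  have hs : 0 ≤ |r| := abs_nonneg r
  have h1 : (0:ℝ) < 1 + |r| := by linarith
  -- c ∈ [0,1]
  have hc : 0 ≤ (ω * r + (1 - ω)) / 2 ∧ (ω * r + (1 - ω)) / 2 ≤ 1 := by
    rcases le_total (2 * |r| / (1 + |r|)) (3/2) with hm | hm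
    · have hm' : 2 * |r| * 2 ≤ 3 * (1 + |r|) := by
        have := (div_le_iff₀ h1).mp hm; linarith
      have hr3 : |r| ≤ 3 := by linarith
      have hω' : ω * (3 * (1 + |r|)) = 3 - |r| := by
        rw [hω, min_eq_left hm]; field_simp; ring
      rcases abs_cases r with ⟨ha, _⟩ | ⟨ha, _⟩
      · constructor
        · rw [le_div_iff₀ (by norm_num : (0:ℝ) < 2)]
          nlinarith [hω', h1, hr3, abs_nonneg r]
        · rw [div_le_iff₀ (by norm_num : (0:ℝ) < 2)]
          nlinarith [hω', h1, hr3, abs_nonneg r]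
      · constructor
        · rw [le_div_iff₀ (by norm_num : (0:ℝ) < 2)]
          nlinarith [hω', h1, hr3, abs_nonneg r]
        · rw [div_le_iff₀ (by norm_num : (0:ℝ) < 2)]
          nlinarith [hω', h1, hr3, abs_nonneg r]
    · have hω0 : ω = 0 := by rw [hω, min_eq_right hm]; ring
      rw [hω0]; norm_num
  obtain ⟨hc0, hc1⟩ := hc
  set c := (ω * r + (1 - ω)) / 2 with hcdef
  have key : ω * (3 * v - vm) / 2 + (1 - ω) * (v + vp) / 2 = v + c * (vp - v) := by
    rw [hvm, hcdef]; ring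
  rw [key]
  have hmin : min v vp ≤ v + c * (vp - v) ∧ v + c * (vp - v) ≤ max v vp := by
    rcases le_total v vp with h | h
    · rw [min_eq_left h, max_eq_right h]
      constructor <;> nlinarith
    · rw [min_eq_right h, max_eq_left h]
      constructor <;> nlinarith
  constructor
  · exact le_trans (le_min (le_trans (min_le_left _ _) (min_le_right _ _)) (min_le_right _ _)) hmin.1
  · exact le_trans hmin.2 (max_le (le_trans (le_max_right vm v) (le_max_left _ _)) (le_max_right _ _))
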